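/- Let Σ be a finite alphabet and let c : Σ* → ℝ be a counter-value function of a one-way real-counter machine, i.e., there is a DFA-like structure with states Q, transition δ : Q × Σ → Q, and increment function g : Q × Σ → ℝ taking values in a finite set, with c(x) the sum of increments along the run on x from the initial state. If the set {c(x) : x ∈ Σ*} is bounded above, then it is finite. -/

import Mathlib

/-- Counter value after running on a string from state `q`: the sum of the
increments `g` along the run determined by transition function `δ`. -/
def counterVal {σ Q : Type*} (δ : Q → σ → Q) (g : Q → σ → ℝ) : Q → List σ → ℝ
  | _, [] => 0
  | q, a :: x => g q a + counterVal δ g (δ q a) x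

/-- State reached after running on a string. -/
def runFrom {σ Q : Type*} (δ : Q → σ → Q) : Q → List σ → Q
  | q, [] => q
  | q, a :: x => runFrom δ (δ q a) x

theorem runFrom_append {σ Q : Type*} (δ : Q → σ → Q) (q : Q) (x y : List σ) :
    runFrom δ q (x ++ y) = runFrom δ (runFrom δ q x) y := by
  induction x generalizing q with
  | nil => rfl
  | cons a x ih => simp [runFrom, ih]

theorem counterVal_append {σ Q : Type*} (δ : Q → σ → Q) (g : Q → σ → ℝ) (q : Q) (x y : List σ) :
    counterVal δ g q (x ++ y) = counterVal δ g q x + counterVal δ g (runFrom δ q x) y := by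
  induction x generalizing q with
  | nil => simp [counterVal, runFrom]
  | cons a x ih => simp [counterVal, runFrom, ih]; ring

theorem pump_val {σ Q : Type*} (δ : Q → σ → Q) (g : Q → σ → ℝ) (q₀ : Q)
    (u w : List σ) (hw : runFrom δ q₀ (u ++ w) = runFrom δ q₀ u) (n : ℕ) :
    counterVal δ g q₀ (u ++ (List.replicate n w).flatten)
      = counterVal δ g q₀ u + n * counterVal δ g (runFrom δ q₀ u) w ∧
    runFrom δ q₀ (u ++ (List.replicate n w).flatten) = runFrom δ q₀ u := by
  induction n with
  | zero => simp
  | succ n ih =>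
    have h1 : u ++ (List.replicate (n+1) w).flatten = (u ++ (List.replicate n w).flatten) ++ w := by
      simp [List.replicate_succ']
    constructor
    · rw [h1, counterVal_append, ih.1, ih.2]
      push_cast; ring
    · rw [h1, runFrom_append, ih.2, ← runFrom_append, hw]

theorem loop_zero {σ Q : Type*} (δ : Q → σ → Q) (g : Q → σ → ℝ) (q₀ : Q)
    (hnonneg : ∀ x : List σ, 0 ≤ counterVal δ g q₀ x)
    (hbdd : BddAbove (Set.range (counterVal δ g q₀)))
    (u w : List σ) (hw : runFrom δ q₀ (u ++ w) = runFrom δ q₀ u) :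
    counterVal δ g (runFrom δ q₀ u) w = 0 := by
  obtain ⟨M, hM⟩ := hbdd
  set c := counterVal δ g (runFrom δ q₀ u) w with hc
  set v := counterVal δ g q₀ u with hv
  rcases lt_trichotomy c 0 with h | h | h
  · -- negative loop contradicts nonnegativity
    exfalso
    obtain ⟨n, hn⟩ := exists_nat_gt (v / (-c))
    have hnc : v < n * (-c) := by
      rw [div_lt_iff₀ (by linarith)] at hn; linarith
    have := hnonneg (u ++ (List.replicate n w).flatten)
    rw [(pump_val δ g q₀ u w hw n).1] at this
    nlinarith
  · exact h
  · -- positive loop contradicts boundedness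
    exfalso
    obtain ⟨n, hn⟩ := exists_nat_gt ((M - v) / c)
    have hnc : M - v < n * c := by
      rw [div_lt_iff₀ h] at hn; linarith
    have hmem : counterVal δ g q₀ (u ++ (List.replicate n w).flatten)
        ∈ Set.range (counterVal δ g q₀) := ⟨_, rfl⟩
    have := hM hmem
    rw [(pump_val δ g q₀ u w hw n).1] at this
    linarith

theorem bounded_counter_values_finite
    (σ Q : Type*) [Fintype σ] [Fintype Q]
    (δ : Q → σ → Q) (g : Q → σ → ℝ) (q₀ : Q)
    (k : ℕ) (p : Fin k → ℕ) (hp : ∀ i, (p i).Prime) (hinj : Function.Injective p)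
    (hg : ∀ q a, ∃ i, g q a = Real.sqrt (p i) ∨ g q a = -Real.sqrt (p i))
    (hnonneg : ∀ x : List σ, 0 ≤ counterVal δ g q₀ x)
    (hbdd : BddAbove (Set.range (counterVal δ g q₀))) :
    (Set.range (counterVal δ g q₀)).Finite := by
  classical
  -- every counter value is attained by a string of length < card Q + 1
  have short : ∀ (n : ℕ) (x : List σ), x.length = n → ∃ y : List σ,
      y.length ≤ Fintype.card Q ∧ counterVal δ g q₀ y = counterVal δ g q₀ x := by
    intro n
    induction n using Nat.strong_induction_on with
    | _ n ih =>
    intro x hlen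
    subst hlen
    by_cases hx : x.length ≤ Fintype.card Q
    · exact ⟨x, hx, rfl⟩
    push_neg at hx
    -- pigeonhole on prefixes of length 0..card Q
    have hcard : Fintype.card Q < Fintype.card (Fin (Fintype.card Q + 1)) := by simp
    obtain ⟨i, j, hne, hij⟩ := Fintype.exists_ne_map_eq_of_card_lt
      (fun i : Fin (Fintype.card Q + 1) => runFrom δ q₀ (x.take i)) hcard
    wlog hlt : (i : ℕ) < (j : ℕ) generalizing i j
    · exact this j i hne.symm hij.symm (by omega)
    have hjle : (j : ℕ) ≤ x.length := by omega
    set u := x.take i with hu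
    set m := (x.take j).drop i with hm
    set z := x.drop j with hz
    have htj : x.take (j : ℕ) = u ++ m := by
      conv_lhs => rw [← List.take_append_drop (i : ℕ) (x.take (j : ℕ))]
      rw [hu, hm, List.take_take, min_eq_left hlt.le]
    have hx_eq : x = (u ++ m) ++ z := by rw [← htj, hz, List.take_append_drop]
    have hloop : runFrom δ q₀ (u ++ m) = runFrom δ q₀ u := by
      rw [← htj]; exact hij.symm
    have hzero := loop_zero δ g q₀ hnonneg hbdd u m hloop
    have hval : counterVal δ g q₀ x = counterVal δ g q₀ (u ++ z) := by
      rw [hx_eq, counterVal_append, counterVal_append, hloop, counterVal_append, hzero]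
      ring
    have hulen : u.length = (i : ℕ) := by
      rw [hu, List.length_take]; omega
    have hlen2 : (u ++ z).length < x.length := by
      rw [List.length_append, hulen, hz, List.length_drop]; omega
    obtain ⟨y, hy1, hy2⟩ := ih _ hlen2 (u ++ z) rfl
    exact ⟨y, hy1, hy2.trans hval.symm⟩
  have hsub : Set.range (counterVal δ g q₀) ⊆
      counterVal δ g q₀ '' {y : List σ | y.length ≤ Fintype.card Q} := by
    rintro _ ⟨x, rfl⟩
    obtain ⟨y, hy1, hy2⟩ := short x.length x rfl
    exact ⟨y, hy1, hy2⟩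
  exact ((List.finite_length_le σ (Fintype.card Q)).image _).subset hsub
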